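/- Let α be any root of the polynomial 2x³ − 4x² − 7x − 2, and let A, B, C be the 3×3 integer matrices with rows ((55, 210, 176), (176, 671, 562), (562, 2143, 1795)), ((−497, −1122, 400), (400, 903, −322), (−322, −727, 259)), and ((185, 172, −72), (−72, −67, 28), (28, 26, −11)) respectively. Then the vector (1, α, α²) is a common eigenvector of A, B, and C; in particular the matrices A, B, C pairwise commute. -/
import Mathlib

/-- Let `α` be any root of `2x³ - 4x² - 7x - 2` and let `A`, `B`, `C` be the `3 × 3` integer
matrices below. Then the vector `(1, α, α²)` is a common eigenvector of `A`, `B` and `C`;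
in particular the matrices `A`, `B`, `C` pairwise commute. -/
theorem common_eigenvector_and_commuting_matrices
    (α : ℂ) (hα : 2 * α ^ 3 - 4 * α ^ 2 - 7 * α - 2 = 0)
    (A B C : Matrix (Fin 3) (Fin 3) ℤ)
    (hA : A = !![55, 210, 176; 176, 671, 562; 562, 2143, 1795])
    (hB : B = !![-497, -1122, 400; 400, 903, -322; -322, -727, 259])
    (hC : C = !![185, 172, -72; -72, -67, 28; 28, 26, -11]) :
    (![(1 : ℂ), α, α ^ 2] ≠ 0 ∧
      (∃ lam : ℂ, (A.map (Int.cast : ℤ → ℂ)).mulVec ![1, α, α ^ 2] = lam • ![1, α, α ^ 2]) ∧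
      (∃ lam : ℂ, (B.map (Int.cast : ℤ → ℂ)).mulVec ![1, α, α ^ 2] = lam • ![1, α, α ^ 2]) ∧
      (∃ lam : ℂ, (C.map (Int.cast : ℤ → ℂ)).mulVec ![1, α, α ^ 2] = lam • ![1, α, α ^ 2])) ∧
    A * B = B * A ∧ A * C = C * A ∧ B * C = C * B := by
  subst hA hB hC
  refine ⟨⟨?_, ⟨55 + 210*α + 176*α^2, ?_⟩, ⟨-497 - 1122*α + 400*α^2, ?_⟩,
      ⟨185 + 172*α - 72*α^2, ?_⟩⟩, ?_, ?_, ?_⟩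
  · intro h
    have := congrFun h 0
    simp at this
  · funext i
    fin_cases i
    · simp [Matrix.mulVec, dotProduct, Fin.sum_univ_three]
    · simp [Matrix.mulVec, dotProduct, Fin.sum_univ_three]
      linear_combination (-88 : ℂ) * hα
    · simp [Matrix.mulVec, dotProduct, Fin.sum_univ_three]
      linear_combination (-281 - 88*α : ℂ) * hα
  · funext i
    fin_cases i
    · simp [Matrix.mulVec, dotProduct, Fin.sum_univ_three]; ring
    · simp [Matrix.mulVec, dotProduct, Fin.sum_univ_three]
      linear_combination (-200 : ℂ) * hα
    · simp [Matrix.mulVec, dotProduct, Fin.sum_univ_three]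
      linear_combination (161 - 200*α : ℂ) * hα
  · funext i
    fin_cases i
    · simp [Matrix.mulVec, dotProduct, Fin.sum_univ_three]; ring
    · simp [Matrix.mulVec, dotProduct, Fin.sum_univ_three]
      linear_combination (36 : ℂ) * hα
    · simp [Matrix.mulVec, dotProduct, Fin.sum_univ_three]
      linear_combination (-14 + 36*α : ℂ) * hα
  all_goals
    ext i j <;> fin_cases i <;> fin_cases j <;>
      simp [Matrix.mul_apply, Fin.sum_univ_three]
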